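/- arXiv:2310.17293 — 2 statements merged into one kernel-verified Lean document; each statement's English description precedes it below -/
import Mathlib

section
/- In the spiked covariance model Σ = θ·β*(β*)ᵀ + I_d with θ > 0 and β* ∈ ℝᵈ a k-sparse unit vector, set Z* = β*(β*)ᵀ. Then for every Z ∈ C = {Z ∈ ℝ^{d×d} : Z ⪰ 0, Tr(Z) = 1}, one has ⟨Σ, Z* − Z⟩ ≥ (θ/2)‖Z* − Z‖₂². -/
set_option autoImplicit false

noncomputable section

/-- The Frobenius inner product `⟨A, Z⟩ = Trace(Zᵀ A)`. -/
def frobInner {d : ℕ} (A Z : Matrix (Fin d) (Fin d) ℝ) : ℝ := ∑ p, ∑ q, A p q * Z p q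

/-- The squared Frobenius norm of a matrix. -/
def frobNormSq {d : ℕ} (A : Matrix (Fin d) (Fin d) ℝ) : ℝ := ∑ p, ∑ q, (A p q) ^ 2

lemma psd_entry_sq {d : ℕ} {Z : Matrix (Fin d) (Fin d) ℝ} (hZ : Z.PosSemidef)
    (i j : Fin d) : (Z i j) ^ 2 ≤ Z i i * Z j j := by
  obtain ⟨m, v, hv⟩ := Matrix.posSemidef_iff_eq_sum_vecMulVec.mp hZ
  obtain ⟨B, rfl⟩ : ∃ B : Matrix (Fin m) (Fin d) ℝ, Z = Matrix.conjTranspose B * B :=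
    ⟨Matrix.of fun k i => v k i, by
      subst hv; ext i j; simp [Matrix.mul_apply, Matrix.vecMulVec_apply, Matrix.sum_apply]⟩
  have h := Finset.sum_mul_sq_le_sq_mul_sq Finset.univ (fun k => B k i) (fun k => B k j)
  have h' : (∑ x, B x i * B x j) ^ 2 ≤ (∑ x, B x i * B x i) * ∑ x, B x j * B x j := by
    simpa [sq] using h
  simpa [Matrix.mul_apply, Matrix.conjTranspose_apply] using h'

lemma psd_frob_le_one {d : ℕ} {Z : Matrix (Fin d) (Fin d) ℝ} (hZ : Z.PosSemidef)
    (htr : Z.trace = 1) : ∑ p, ∑ q, (Z p q) ^ 2 ≤ 1 := by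
  have h1 : ∑ p, ∑ q, (Z p q) ^ 2 ≤ ∑ p, ∑ q, Z p p * Z q q := by
    refine Finset.sum_le_sum fun p _ => Finset.sum_le_sum fun q _ => psd_entry_sq hZ p q
  have h2 : ∑ p, ∑ q, Z p p * Z q q = (∑ p, Z p p) * (∑ q, Z q q) := by
    rw [Finset.sum_mul_sum]
  have h3 : (∑ p : Fin d, Z p p) = 1 := by simpa [Matrix.trace, Matrix.diag] using htr
  rw [h2, h3] at h1; linarith

/-- Lemma: global curvature of the excess risk in the spiked covariance model.
For `Σ = θ β*(β*)ᵀ + I_d` with `β*` a `k`-sparse unit vector and `Z* = β*(β*)ᵀ`,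
every `Z ⪰ 0` with `Tr(Z) = 1` satisfies `⟨Σ, Z* - Z⟩ ≥ (θ/2)‖Z* - Z‖₂²`. -/
theorem spiked_model_excess_risk_curvature
    (d k : ℕ) (θ : ℝ) (hθ : 0 < θ)
    (β : Fin d → ℝ)
    (hsparse : Nat.card {i : Fin d // β i ≠ 0} ≤ k)
    (hunit : ∑ i, (β i) ^ 2 = 1)
    (Zs Sigma : Matrix (Fin d) (Fin d) ℝ)
    (hZs : Zs = Matrix.of fun i j => β i * β j)
    (hSigma : Sigma = θ • Zs + 1) :
    ∀ Z : Matrix (Fin d) (Fin d) ℝ, Z.PosSemidef → Z.trace = 1 →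
      (θ / 2) * frobNormSq (Zs - Z) ≤ frobInner Sigma (Zs - Z) := by
  intro Z hZ htr
  have hS : ∑ p, ∑ q, (Z p q) ^ 2 ≤ 1 := psd_frob_le_one hZ htr
  have htrZ : (∑ p : Fin d, Z p p) = 1 := by simpa [Matrix.trace, Matrix.diag] using htr
  set b : ℝ := ∑ p, ∑ q, β p * β q * Z p q with hb
  set S : ℝ := ∑ p, ∑ q, (Z p q) ^ 2 with hSdef
  have hnorm : frobNormSq (Zs - Z) = 1 - 2 * b + S := by
    have : frobNormSq (Zs - Z)
        = ∑ p, ∑ q, ((β p * β q) ^ 2 - 2 * (β p * β q * Z p q) + (Z p q) ^ 2) := by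
      simp only [frobNormSq, hZs, Matrix.sub_apply, Matrix.of_apply]
      congr 1; ext p; congr 1; ext q; ring
    rw [this]
    have h1 : ∑ p, ∑ q, ((β p * β q) ^ 2 - 2 * (β p * β q * Z p q) + (Z p q) ^ 2)
        = (∑ p, ∑ q, (β p * β q) ^ 2) - 2 * b + S := by
      simp [Finset.sum_sub_distrib, Finset.sum_add_distrib, hb, hSdef, Finset.mul_sum]
    have h2 : (∑ p, ∑ q, (β p * β q) ^ 2) = 1 := by
      have : (∑ p, ∑ q, (β p * β q) ^ 2) = (∑ p, (β p)^2) * (∑ q, (β q)^2) := by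
        rw [Finset.sum_mul_sum]; congr 1; ext p; congr 1; ext q; ring
      rw [this, hunit]; ring
    rw [h1, h2]
  have hinner : frobInner Sigma (Zs - Z) = θ * (1 - b) := by
    have : frobInner Sigma (Zs - Z)
        = ∑ p, ∑ q, (θ * (β p * β q * (β p * β q) - β p * β q * Z p q)
            + ((1 : Matrix (Fin d) (Fin d) ℝ) p q * (β p * β q) - (1 : Matrix (Fin d) (Fin d) ℝ) p q * Z p q)) := by
      simp only [frobInner, hSigma, hZs, Matrix.add_apply, Matrix.smul_apply, Matrix.sub_apply,
        Matrix.of_apply, smul_eq_mul]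
      congr 1; ext p; congr 1; ext q; ring
    rw [this]
    have e1 : ∑ p, ∑ q, (β p * β q * (β p * β q)) = 1 := by
      have : (∑ p, ∑ q, β p * β q * (β p * β q)) = (∑ p, (β p)^2) * (∑ q, (β q)^2) := by
        rw [Finset.sum_mul_sum]; congr 1; ext p; congr 1; ext q; ring
      rw [this, hunit]; ring
    have e2 : ∑ p, ∑ q, ((1 : Matrix (Fin d) (Fin d) ℝ) p q * (β p * β q)) = 1 := by
      simp [Matrix.one_apply, Finset.sum_ite_eq']
      simpa [sq] using hunit
    have e3 : ∑ p, ∑ q, ((1 : Matrix (Fin d) (Fin d) ℝ) p q * Z p q) = 1 := by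
      simp [Matrix.one_apply, Finset.sum_ite_eq']
      simpa using htrZ
    calc ∑ p, ∑ q, (θ * (β p * β q * (β p * β q) - β p * β q * Z p q)
            + ((1 : Matrix (Fin d) (Fin d) ℝ) p q * (β p * β q) - (1 : Matrix (Fin d) (Fin d) ℝ) p q * Z p q))
        = θ * ((∑ p, ∑ q, β p * β q * (β p * β q)) - b)
          + ((∑ p, ∑ q, (1 : Matrix (Fin d) (Fin d) ℝ) p q * (β p * β q))
            - ∑ p, ∑ q, (1 : Matrix (Fin d) (Fin d) ℝ) p q * Z p q) := by
          simp [Finset.sum_add_distrib, Finset.sum_sub_distrib, Finset.mul_sum, hb,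
            mul_sub]
      _ = θ * (1 - b) := by rw [e1, e2, e3]; ring
  rw [hnorm, hinner]
  nlinarith [hS]
end
end

section
/- For the sparse PCA problem with ℓ₁ regularization: let β* ∈ ℝᵈ be a k-sparse unit vector, Z* = β*(β*)ᵀ (so Z* has at most k² nonzero entries), C = {Z ∈ ℝ^{d×d} : Z ⪰ 0, Tr(Z) = 1}, regularization norm ‖·‖₁ (entrywise ℓ₁), and G(Z) = ‖Z‖₂². Let A > 0, δ ∈ (0,1), and write r*(ρ) = r*_{RERM,G}(A,ρ,δ). If ρ > 0 satisfies ρ ≥ 10k√(r*(ρ)), then ρ satisfies the A-sparsity equation, i.e. inf_{Z∈C, ‖Z−Z*‖₁=ρ, ‖Z−Z*‖₂² ≤ r*(ρ)} sup_{Φ∈Γ_{Z*}(ρ)} ⟨Φ, Z−Z*⟩ ≥ (4/5)ρ. -/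
set_option autoImplicit false

open MeasureTheory ProbabilityTheory

noncomputable section

/-- The entrywise `ℓ₁` norm of a matrix. -/
def entrywiseL1 {d : ℕ} (A : Matrix (Fin d) (Fin d) ℝ) : ℝ := ∑ p, ∑ q, |A p q|

/-- The linear loss for sparse PCA: `ℓ_Z(x) = -⟨xxᵀ, Z⟩`. -/
def pcaLoss {d : ℕ} (Z : Matrix (Fin d) (Fin d) ℝ) (x : Fin d → ℝ) : ℝ :=
  -frobInner (Matrix.of fun p q => x p * x q) Z

/-- The excess loss `L_Z = ℓ_Z - ℓ_{Z*}`. -/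
def pcaExc {d : ℕ} (Zs Z : Matrix (Fin d) (Fin d) ℝ) (x : Fin d → ℝ) : ℝ :=
  pcaLoss Z x - pcaLoss Zs x

/-- The excess risk `PL_Z`. -/
def pcaExcRisk {d : ℕ} (P : Measure (Fin d → ℝ)) (Zs Z : Matrix (Fin d) (Fin d) ℝ) : ℝ :=
  ∫ x, pcaExc Zs Z x ∂P

/-- The empirical excess loss `P_N L_Z`. -/
def pcaEmp {Ω : Type*} {N d : ℕ} (X : Fin N → Ω → Fin d → ℝ)
    (Zs Z : Matrix (Fin d) (Fin d) ℝ) (ω : Ω) : ℝ :=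
  (N : ℝ)⁻¹ * ∑ i, pcaExc Zs Z (X i ω)

/-- The complexity fixed point `r*_{RERM,G}(A, ρ, δ)` for sparse PCA, with
`G(Z) = ‖Z‖₂²` and regularization norm `nrm`. -/
def rstarPCA {Ω : Type*} [MeasurableSpace Ω] {N d : ℕ} (μ : Measure Ω)
    (P : Measure (Fin d → ℝ)) (X : Fin N → Ω → Fin d → ℝ)
    (C : Set (Matrix (Fin d) (Fin d) ℝ)) (Zs : Matrix (Fin d) (Fin d) ℝ)
    (nrm : Matrix (Fin d) (Fin d) ℝ → ℝ) (A ρ δ : ℝ) : ℝ :=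
  sInf {r : ℝ | 0 < r ∧
    ENNReal.ofReal (1 - δ) ≤
      μ {ω | ∀ Z ∈ C, nrm (Z - Zs) ≤ ρ → frobNormSq (Z - Zs) ≤ r →
        |pcaExcRisk P Zs Z - pcaEmp X Zs Z ω| ≤ r / (3 * A)}}

/-- The subdifferential of a norm-like functional on matrices at `V`. -/
def msubdiff {d : ℕ} (nrm : Matrix (Fin d) (Fin d) ℝ → ℝ)
    (V : Matrix (Fin d) (Fin d) ℝ) : Set (Matrix (Fin d) (Fin d) ℝ) :=
  {Φ | ∀ Hm : Matrix (Fin d) (Fin d) ℝ, frobInner Φ Hm ≤ nrm (V + Hm) - nrm V}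

/-- `Γ_{Z*}(ρ)`: union of subdifferentials at points within `ρ/20` of `Z*`. -/
def mGamma {d : ℕ} (nrm : Matrix (Fin d) (Fin d) ℝ → ℝ)
    (Zs : Matrix (Fin d) (Fin d) ℝ) (ρ : ℝ) : Set (Matrix (Fin d) (Fin d) ℝ) :=
  ⋃ V ∈ {V : Matrix (Fin d) (Fin d) ℝ | nrm (V - Zs) ≤ ρ / 20}, msubdiff nrm V


lemma abs_sign_le_one (x : ℝ) : |Real.sign x| ≤ 1 := by
  rcases lt_trichotomy x 0 with h | h | h
  · rw [Real.sign_of_neg h]; norm_num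
  · rw [h, Real.sign_zero]; norm_num
  · rw [Real.sign_of_pos h]; norm_num

lemma sign_mul_self' (x : ℝ) : Real.sign x * x = |x| := by
  rcases lt_trichotomy x 0 with h | h | h
  · rw [Real.sign_of_neg h, abs_of_neg h]; ring
  · rw [h, Real.sign_zero, abs_zero, mul_zero]
  · rw [Real.sign_of_pos h, abs_of_pos h, one_mul]

lemma subgrad_pointwise (φ a h : ℝ) (h1 : |φ| ≤ 1) (h2 : φ * a = |a|) :
    φ * h ≤ |a + h| - |a| := by
  have e : φ * h = φ * (a + h) - |a| := by rw [← h2]; ring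
  have : φ * (a + h) ≤ |a + h| := by
    calc φ * (a + h) ≤ |φ * (a + h)| := le_abs_self _
      _ = |φ| * |a + h| := abs_mul _ _
      _ ≤ 1 * |a + h| := by
          exact mul_le_mul_of_nonneg_right h1 (abs_nonneg _)
      _ = |a + h| := one_mul _
  linarith

lemma entrywiseL1_triangle {d : ℕ} (V H : Matrix (Fin d) (Fin d) ℝ) :
    entrywiseL1 (V + H) ≤ entrywiseL1 V + entrywiseL1 H := by
  unfold entrywiseL1
  rw [← Finset.sum_add_distrib]
  refine Finset.sum_le_sum fun p _ => ?_
  rw [← Finset.sum_add_distrib]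
  exact Finset.sum_le_sum fun q _ => by simpa using abs_add_le (V p q) (H p q)

/-- Lemma: for sparse PCA with `ℓ₁` regularization, any `ρ ≥ 10k√(r*(ρ))`
satisfies the `A`-sparsity equation. -/
theorem sparse_PCA_l1_sparsity_equation
    {Ω : Type*} [MeasurableSpace Ω] (μ : Measure Ω) [IsProbabilityMeasure μ]
    {N d : ℕ} (hN : 0 < N) (hd : 0 < d)
    (P : Measure (Fin d → ℝ)) [IsProbabilityMeasure P]
    (X : Fin N → Ω → Fin d → ℝ)
    (hXmeas : ∀ i, Measurable (X i))
    (hXindep : iIndepFun X μ)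
    (hXdist : ∀ i, μ.map (X i) = P)
    (k : ℕ) (β : Fin d → ℝ)
    (hsparse : Nat.card {i : Fin d // β i ≠ 0} ≤ k)
    (hunit : ∑ i, (β i) ^ 2 = 1)
    (Zs : Matrix (Fin d) (Fin d) ℝ)
    (hZs : Zs = Matrix.of fun i j => β i * β j)
    (C : Set (Matrix (Fin d) (Fin d) ℝ))
    (hC : C = {Z | Z.PosSemidef ∧ Z.trace = 1})
    (A δ : ℝ) (hA : 0 < A) (hδ0 : 0 < δ) (hδ1 : δ < 1)
    (ρ : ℝ) (hρpos : 0 < ρ)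
    (hρ : 10 * k * Real.sqrt (rstarPCA μ P X C Zs entrywiseL1 A ρ δ) ≤ ρ) :
    ∀ Z ∈ C, entrywiseL1 (Z - Zs) = ρ →
      frobNormSq (Z - Zs) ≤ rstarPCA μ P X C Zs entrywiseL1 A ρ δ →
      (4 / 5) * ρ ≤
        sSup ((fun Φ => frobInner Φ (Z - Zs)) '' mGamma entrywiseL1 Zs ρ) := by
  intro Z hZC hL1 hFr
  set r := rstarPCA μ P X C Zs entrywiseL1 A ρ δ with hr
  set H : Matrix (Fin d) (Fin d) ℝ := Z - Zs with hHdef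
  set Φ : Matrix (Fin d) (Fin d) ℝ :=
    Matrix.of fun p q => if β p * β q ≠ 0 then Real.sign (β p * β q) else Real.sign (H p q)
    with hΦdef
  have hΦabs : ∀ p q, |Φ p q| ≤ 1 := by
    intro p q
    simp only [hΦdef, Matrix.of_apply]
    split <;> exact abs_sign_le_one _
  have hΦZs : ∀ p q, Φ p q * Zs p q = |Zs p q| := by
    intro p q
    simp only [hΦdef, hZs, Matrix.of_apply]
    split
    · exact sign_mul_self' _
    · next h => push_neg at h; rw [h]; simp
  -- Φ is in the subdifferential at Zs, hence in Γ
  have hΦmem : Φ ∈ mGamma entrywiseL1 Zs ρ := by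
    refine Set.mem_biUnion (show Zs ∈ {V : Matrix (Fin d) (Fin d) ℝ |
        entrywiseL1 (V - Zs) ≤ ρ / 20} from ?_) ?_
    · show entrywiseL1 (Zs - Zs) ≤ ρ / 20
      have : entrywiseL1 (Zs - Zs) = 0 := by
        simp [entrywiseL1, sub_self]
      rw [this]; linarith
    · intro Hm
      unfold frobInner entrywiseL1
      rw [← Finset.sum_sub_distrib]
      refine Finset.sum_le_sum fun p _ => ?_
      rw [← Finset.sum_sub_distrib]
      refine Finset.sum_le_sum fun q _ => ?_
      simpa using subgrad_pointwise (Φ p q) (Zs p q) (Hm p q) (hΦabs p q) (hΦZs p q)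
  -- nonnegativity of r
  have hFnn : 0 ≤ frobNormSq H := by
    unfold frobNormSq
    positivity
  have hrnn : 0 ≤ r := le_trans hFnn hFr
  -- support set
  set S : Finset (Fin d × Fin d) :=
    Finset.univ.filter (fun pq => β pq.1 * β pq.2 ≠ 0) with hSdef
  set T : Finset (Fin d) := Finset.univ.filter (fun i => β i ≠ 0) with hTdef
  have hTk : T.card ≤ k := by
    have : Nat.card {i : Fin d // β i ≠ 0} = T.card := by
      rw [Nat.card_eq_fintype_card, hTdef, Fintype.card_subtype]
    omega
  have hScard : S.card ≤ k * k := by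
    have hST : S = T ×ˢ T := by
      ext pq
      simp [hSdef, hTdef, Finset.mem_product, mul_ne_zero_iff]
    rw [hST, Finset.card_product]
    exact Nat.mul_le_mul hTk hTk
  -- sum of |H| over S is small
  have hSsq : ∑ pq ∈ S, (H pq.1 pq.2) ^ 2 ≤ r := by
    refine le_trans ?_ hFr
    have : frobNormSq H = ∑ pq ∈ (Finset.univ : Finset (Fin d × Fin d)), (H pq.1 pq.2) ^ 2 := by
      unfold frobNormSq
      rw [← Finset.univ_product_univ, Finset.sum_product]
    rw [this]
    exact Finset.sum_le_sum_of_subset_of_nonneg (Finset.subset_univ _)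
      (fun pq _ _ => sq_nonneg _)
  have hSabs : ∑ pq ∈ S, |H pq.1 pq.2| ≤ (k : ℝ) * Real.sqrt r := by
    have h0 : 0 ≤ ∑ pq ∈ S, |H pq.1 pq.2| :=
      Finset.sum_nonneg fun pq _ => abs_nonneg _
    have hsq : (∑ pq ∈ S, |H pq.1 pq.2|) ^ 2 ≤ ((k : ℝ) * k) * r := by
      calc (∑ pq ∈ S, |H pq.1 pq.2|) ^ 2
          ≤ S.card * ∑ pq ∈ S, |H pq.1 pq.2| ^ 2 := sq_sum_le_card_mul_sum_sq
        _ = S.card * ∑ pq ∈ S, (H pq.1 pq.2) ^ 2 := by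
            congr 1; exact Finset.sum_congr rfl fun pq _ => sq_abs _
        _ ≤ ((k : ℝ) * k) * r := by
            refine mul_le_mul ?_ hSsq (Finset.sum_nonneg fun pq _ => sq_nonneg _)
              (by positivity)
            exact_mod_cast hScard
    calc (∑ pq ∈ S, |H pq.1 pq.2|)
        = Real.sqrt ((∑ pq ∈ S, |H pq.1 pq.2|) ^ 2) := (Real.sqrt_sq h0).symm
      _ ≤ Real.sqrt (((k : ℝ) * k) * r) := Real.sqrt_le_sqrt hsq
      _ = (k : ℝ) * Real.sqrt r := by
          rw [Real.sqrt_mul (by positivity), Real.sqrt_mul_self (Nat.cast_nonneg k)]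
  -- lower bound for frobInner Φ H
  have hL1' : ∑ pq ∈ (Finset.univ : Finset (Fin d × Fin d)), |H pq.1 pq.2| = ρ := by
    rw [← hL1]
    unfold entrywiseL1
    rw [← Finset.univ_product_univ, Finset.sum_product]
  have hlow : ρ - 2 * ∑ pq ∈ S, |H pq.1 pq.2| ≤ frobInner Φ H := by
    have hfe : frobInner Φ H =
        ∑ pq ∈ (Finset.univ : Finset (Fin d × Fin d)), Φ pq.1 pq.2 * H pq.1 pq.2 := by
      unfold frobInner
      rw [← Finset.univ_product_univ, Finset.sum_product]
    have hpt : ∀ pq ∈ (Finset.univ : Finset (Fin d × Fin d)),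
        |H pq.1 pq.2| - 2 * (if β pq.1 * β pq.2 ≠ 0 then |H pq.1 pq.2| else 0)
          ≤ Φ pq.1 pq.2 * H pq.1 pq.2 := by
      intro pq _
      by_cases hc : β pq.1 * β pq.2 ≠ 0
      · rw [if_pos hc]
        have h1 : -(|H pq.1 pq.2|) ≤ Φ pq.1 pq.2 * H pq.1 pq.2 := by
          have := neg_abs_le (Φ pq.1 pq.2 * H pq.1 pq.2)
          have h2 : |Φ pq.1 pq.2 * H pq.1 pq.2| ≤ |H pq.1 pq.2| := by
            rw [abs_mul]
            calc |Φ pq.1 pq.2| * |H pq.1 pq.2| ≤ 1 * |H pq.1 pq.2| :=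
              mul_le_mul_of_nonneg_right (hΦabs _ _) (abs_nonneg _)
              _ = |H pq.1 pq.2| := one_mul _
          linarith
        linarith
      · rw [if_neg hc]
        have : Φ pq.1 pq.2 * H pq.1 pq.2 = |H pq.1 pq.2| := by
          simp only [hΦdef, Matrix.of_apply]
          rw [if_neg hc]
          exact sign_mul_self' _
        linarith
    have := Finset.sum_le_sum hpt
    rw [← hfe] at this
    refine le_trans (le_of_eq ?_) this
    rw [Finset.sum_sub_distrib, hL1', ← Finset.mul_sum]
    simp only [hSdef, Finset.sum_filter]
  -- bound: 2 * k * sqrt r ≤ ρ / 5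
  have hkey : (4 / 5) * ρ ≤ frobInner Φ H := by
    have h2 : 2 * ∑ pq ∈ S, |H pq.1 pq.2| ≤ 2 * ((k : ℝ) * Real.sqrt r) := by linarith
    have : 10 * (k : ℝ) * Real.sqrt r ≤ ρ := hρ
    linarith
  -- the image set is bounded above by ρ
  have hbdd : BddAbove ((fun Φ => frobInner Φ H) '' mGamma entrywiseL1 Zs ρ) := by
    refine ⟨ρ, ?_⟩
    rintro x ⟨Φ', hΦ', rfl⟩
    simp only [mGamma, Set.mem_iUnion, Set.mem_setOf_eq] at hΦ'
    obtain ⟨V, hV, hsub⟩ := hΦ'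
    have h1 : frobInner Φ' H ≤ entrywiseL1 (V + H) - entrywiseL1 V := hsub H
    have h2 : entrywiseL1 (V + H) ≤ entrywiseL1 V + entrywiseL1 H :=
      entrywiseL1_triangle V H
    have : entrywiseL1 H = ρ := hL1
    simp only
    linarith
  exact le_trans hkey (le_csSup hbdd ⟨Φ, hΦmem, rfl⟩)
end
end
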